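/- arXiv:2004.13916 — 5 statements merged into one kernel-verified Lean document; each statement's English description precedes it below -/
import Mathlib

section
/- For a partition λ, the Nekrasov factor N_{λ,∅}(q^{-1}) = ∏_{□∈λ}(1 - q^{-ℓ_λ(□)-a_∅(□)-1}·q^{-1}) is nonzero if and only if λ is a column, i.e., λ = (1^n) for some n ≥ 0. (Here for □=(i,j), a_∅(□) = -j and ℓ_λ(□) = λ'_j - i.) -/
open Finset

noncomputable section

/-- The `i`-th part (0-indexed) of a partition given as a list of parts. -/
def part (l : List ℕ) (i : ℕ) : ℕ := l.getD i 0

/-- The `j`-th column length (0-indexed), i.e. λ'_{j+1} = #{i : λ_i ≥ j+1}. -/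
def conjPart (l : List ℕ) (j : ℕ) : ℕ := (l.filter (fun p => j < p)).length

/-- A list of naturals represents a partition: weakly decreasing with positive parts. -/
def IsPartition (l : List ℕ) : Prop := l.Pairwise (· ≥ ·) ∧ ∀ p ∈ l, 0 < p

/-- The Nekrasov factor N_{λ,μ}(u) =
  ∏_{(i,j)∈λ}(1 - q^{-ℓ_λ(i,j)-a_μ(i,j)-1} u) · ∏_{(i,j)∈μ}(1 - q^{ℓ_μ(i,j)+a_λ(i,j)+1} u),
  with cells 0-indexed: arm a_μ(i,j) = μ_{i+1} - (j+1), leg ℓ_λ(i,j) = λ'_{j+1} - (i+1). -/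
def nek (q u : ℂ) (lam mu : List ℕ) : ℂ :=
  (∏ i ∈ Finset.range lam.length, ∏ j ∈ Finset.range (part lam i),
    (1 - q ^ (-((conjPart lam j : ℤ) - ((i : ℤ) + 1)) - ((part mu i : ℤ) - ((j : ℤ) + 1)) - 1) * u)) *
  (∏ i ∈ Finset.range mu.length, ∏ j ∈ Finset.range (part mu i),
    (1 - q ^ (((conjPart mu j : ℤ) - ((i : ℤ) + 1)) + ((part lam i : ℤ) - ((j : ℤ) + 1)) + 1) * u))

/-- λ̄ : all parts decreased by 1, zero parts dropped. -/
def bar (l : List ℕ) : List ℕ := (l.map (fun p => p - 1)).filter (fun p => 0 < p)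

/-- r_n(λ) = (λ_1+1, …, λ_n+1, λ_{n+2}, λ_{n+3}, …). -/
def rn (n : ℕ) (l : List ℕ) : List ℕ :=
  ((List.range n).map (fun i => part l i + 1)) ++ l.drop (n + 1)

/-- The conjugate (transposed) partition as a list. -/
def conjList (l : List ℕ) : List ℕ :=
  (List.range (part l 0)).map (fun j => conjPart l j)

end



lemma conjPart_le_length (l : List ℕ) (j : ℕ) : conjPart l j ≤ l.length :=
  List.length_filter_le _ _

lemma part_anti (l : List ℕ) (hs : l.Pairwise (· ≥ ·)) {i k : ℕ} (hik : i ≤ k) :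
    part l k ≤ part l i := by
  unfold part
  by_cases hk : k < l.length
  · have hi : i < l.length := lt_of_le_of_lt hik hk
    rw [List.getD_eq_getElem _ _ hk, List.getD_eq_getElem _ _ hi]
    rcases eq_or_lt_of_le hik with h | h
    · subst h; exact le_rfl
    · exact List.pairwise_iff_getElem.mp hs i k hi hk h
  · rw [List.getD_eq_default _ _ (le_of_not_gt hk)]
    exact Nat.zero_le _

lemma lt_part_of_lt_conjPart (l : List ℕ) (hs : l.Pairwise (· ≥ ·)) {i j : ℕ}
    (h : i < conjPart l j) : j < part l i := by
  by_contra hle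
  push_neg at hle
  have hcle : conjPart l j ≤ i := by
    unfold conjPart
    rw [← List.countP_eq_length_filter]
    have hsplit : l = l.take i ++ l.drop i := (List.take_append_drop i l).symm
    calc l.countP (fun p => decide (j < p))
        = (l.take i).countP (fun p => decide (j < p)) + (l.drop i).countP (fun p => decide (j < p)) := by
          conv_lhs => rw [hsplit]
          rw [List.countP_append]
      _ = (l.take i).countP (fun p => decide (j < p)) + 0 := by
          congr 1
          rw [List.countP_eq_zero]
          intro a ha
          obtain ⟨k, hk, hgk⟩ := List.mem_iff_getElem.mp ha
          have hk' : (l.drop i)[k] = l[i + k]'(by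
            have := (List.length_drop (i := i) (l := l)) ▸ hk; omega) := List.getElem_drop ..
          have : a = part l (i + k) := by
            rw [part, List.getD_eq_getElem _ _ (by have := (List.length_drop (i := i) (l := l)) ▸ hk; omega), ← hk', hgk]
          have := part_anti l hs (Nat.le_add_right i k)
          simp only [decide_eq_true_eq] at *
          omega
      _ = (l.take i).countP (fun p => decide (j < p)) := by omega
      _ ≤ (l.take i).length := List.countP_le_length
      _ ≤ i := List.length_take_le _ _
  omega

theorem stmt0 (q : ℂ) (hq : q ≠ 0) (hroot : ∀ m : ℤ, m ≠ 0 → q ^ m ≠ 1)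
    (lam : List ℕ) (hlam : IsPartition lam) :
    nek q q⁻¹ lam [] ≠ 0 ↔ ∃ n : ℕ, lam = List.replicate n 1 := by
  have key : nek q q⁻¹ lam [] =
      ∏ i ∈ range lam.length, ∏ j ∈ range (part lam i),
        (1 - q ^ ((i : ℤ) + (j : ℤ) - (conjPart lam j : ℤ))) := by
    unfold nek
    simp only [List.length_nil, range_zero, prod_empty, mul_one]
    refine prod_congr rfl fun i _ => prod_congr rfl fun j _ => ?_
    have hp : (part [] i : ℤ) = 0 := by simp [part]
    rw [hp, ← zpow_neg_one q, ← zpow_add₀ hq]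
    congr 2
    ring
  rw [key, Finset.prod_ne_zero_iff]
  simp only [Finset.prod_ne_zero_iff, mem_range]
  constructor
  · intro h
    by_contra hne
    push_neg at hne
    have h2 : ∃ p ∈ lam, 2 ≤ p := by
      by_contra h3
      push_neg at h3
      exact hne lam.length (List.eq_replicate_iff.mpr ⟨rfl, fun b hb =>
        le_antisymm (by have := h3 b hb; omega) (hlam.2 b hb)⟩)
    obtain ⟨p, hp, hp2⟩ := h2
    obtain ⟨k, hk, hgk⟩ := List.mem_iff_getElem.mp hp
    have hlen : 0 < lam.length := by omega
    have h0 : 2 ≤ part lam 0 := by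
      have h1 := part_anti lam hlam.1 (Nat.zero_le k)
      have h2 : part lam k = p := by rw [part, List.getD_eq_getElem _ _ hk, hgk]
      omega
    have hc1 : 1 ≤ conjPart lam 1 := by
      have hmem : part lam 0 ∈ lam.filter (fun p => 1 < p) := by
        refine List.mem_filter.mpr ⟨?_, by simp; omega⟩
        rw [part, List.getD_eq_getElem _ _ hlen]
        exact List.getElem_mem _
      exact List.length_pos_of_mem hmem
    set i := conjPart lam 1 - 1 with hi
    have hilt : i < conjPart lam 1 := by omega
    have hjlt : 1 < part lam i := lt_part_of_lt_conjPart lam hlam.1 hilt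
    have hilen : i < lam.length := lt_of_lt_of_le hilt (conjPart_le_length lam 1)
    have := h i hilen 1 hjlt
    have hexp : (i : ℤ) + (1 : ℕ) - (conjPart lam 1 : ℤ) = 0 := by
      push_cast; omega
    rw [hexp] at this
    simp at this
  · rintro ⟨n, rfl⟩ i hi j hj
    simp only [List.length_replicate] at hi
    have hpart : part (List.replicate n 1) i = 1 := by
      rw [part, List.getD_eq_getElem _ _ (by simpa using hi)]
      simp
    rw [hpart] at hj
    interval_cases j
    have hconj : conjPart (List.replicate n 1) 0 = n := by
      simp [conjPart, List.filter_replicate]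
    rw [hconj]
    have hm : (i : ℤ) + (0 : ℕ) - (n : ℤ) ≠ 0 := by push_cast; omega
    exact sub_ne_zero_of_ne (fun h => hroot _ hm h.symm)
end

section
/- For partitions λ, μ, the Nekrasov factor satisfies N_{λ,μ}(1) ≠ 0 if and only if λ = μ. (Assume q is not a root of unity.) -/
open Finset

lemma part_cons_succ (a : ℕ) (t : List ℕ) (i : ℕ) : part (a :: t) (i + 1) = part t i := rfl

lemma part_cons_zero' (a : ℕ) (t : List ℕ) : part (a :: t) 0 = a := rfl

lemma part_eq_zero_of_le {l : List ℕ} {i : ℕ} (h : l.length ≤ i) : part l i = 0 := by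
  rw [part, List.getD_eq_default _ _ h]

lemma lt_length_of_part_ne {l : List ℕ} {i : ℕ} (h : part l i ≠ 0) : i < l.length := by
  by_contra hc
  exact h (part_eq_zero_of_le (by omega))

lemma part_mem {l : List ℕ} {i : ℕ} (h : part l i ≠ 0) : part l i ∈ l := by
  have hi := lt_length_of_part_ne h
  simp only [part, List.getD_eq_getElem _ _ hi]
  exact List.getElem_mem hi

lemma conjPart_cons (a : ℕ) (t : List ℕ) (j : ℕ) :
    conjPart (a :: t) j = (if j < a then 1 else 0) + conjPart t j := by
  simp only [conjPart, List.filter_cons]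
  split <;> rename_i h
  · simp at h
    simp [h, List.length_cons, Nat.add_comm]
  · simp at h
    simp [Nat.not_lt.mpr h]

/-- Lemma A: if `(i,j)` is a cell of `l` (i.e. `j < part l i`) then `i < conjPart l j`. -/
lemma lt_conjPart {l : List ℕ} (hl : l.Pairwise (· ≥ ·)) :
    ∀ {i j : ℕ}, j < part l i → i < conjPart l j := by
  induction l with
  | nil => intro i j h; simp [part] at h
  | cons a t ih =>
    rcases List.pairwise_cons.mp hl with ⟨ha, ht⟩
    intro i j h
    cases i with
    | zero =>
      have hja : j < a := h
      simp [conjPart_cons, hja]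
    | succ i =>
      have h' : j < part t i := h
      have hi := ih ht h'
      have hmem : part t i ∈ t := part_mem (by omega)
      have hja : j < a := lt_of_lt_of_le h' (ha _ hmem)
      rw [conjPart_cons]
      simp [hja]
      omega

/-- Lemma B: if `part l i ≤ j` then `conjPart l j ≤ i`. -/
lemma conjPart_le {l : List ℕ} (hl : l.Pairwise (· ≥ ·)) :
    ∀ {i j : ℕ}, part l i ≤ j → conjPart l j ≤ i := by
  induction l with
  | nil => intro i j _; simp [conjPart]
  | cons a t ih =>
    rcases List.pairwise_cons.mp hl with ⟨ha, ht⟩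
    intro i j h
    cases i with
    | zero =>
      have haj : a ≤ j := h
      have h0 : part t 0 ≤ j := by
        rcases Nat.eq_zero_or_pos (part t 0) with h0 | h0
        · omega
        · exact le_trans (ha _ (part_mem (by omega))) haj
      have := ih ht h0
      rw [conjPart_cons]
      simp [Nat.not_lt.mpr haj]
      omega
    | succ i =>
      have h' : part t i ≤ j := h
      have := ih ht h'
      rw [conjPart_cons]
      split <;> omega

/-- Monotonicity: parts are weakly decreasing. -/
lemma part_mono {l : List ℕ} (hl : l.Pairwise (· ≥ ·)) :
    ∀ {k i : ℕ}, k ≤ i → part l i ≤ part l k := by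
  induction l with
  | nil => intro k i _; simp [part]
  | cons a t ih =>
    rcases List.pairwise_cons.mp hl with ⟨ha, ht⟩
    intro k i hk
    cases k with
    | zero =>
      cases i with
      | zero => exact le_refl _
      | succ i =>
        rw [part_cons_succ, part_cons_zero']
        rcases Nat.eq_zero_or_pos (part t i) with h0 | h0
        · omega
        · exact ha _ (part_mem (by omega))
    | succ k =>
      cases i with
      | zero => omega
      | succ i => exact ih ht (by omega)

/-- A partition is determined by its part function. -/
lemma part_ext {l m : List ℕ} (hl : IsPartition l) (hm : IsPartition m)
    (h : ∀ i, part l i = part m i) : l = m := by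
  have key : ∀ (a b : List ℕ), IsPartition b → (∀ i, part a i = part b i) →
      b.length ≤ a.length := by
    intro a b hb hab
    by_contra hc
    push_neg at hc
    have h1 : part a a.length = 0 := part_eq_zero_of_le le_rfl
    have h2 : part b a.length ≠ 0 := by
      have : part b a.length ∈ b := by
        simp only [part, List.getD_eq_getElem _ _ hc]
        exact List.getElem_mem hc
      have := hb.2 _ this
      omega
    rw [hab a.length] at h1
    exact h2 h1
  have hlen : l.length = m.length :=
    le_antisymm (key m l hl (fun i => (h i).symm)) (key l m hm h)
  apply List.ext_getElem hlen
  intro i h1 h2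
  have := h i
  rwa [part, part, List.getD_eq_getElem _ _ h1, List.getD_eq_getElem _ _ h2] at this

/-- If some part of `lam` exceeds the corresponding part of `mu`, there is a cell of `lam`
with the mixed-hook equal to zero. -/
lemma exists_zero_cell {lam mu : List ℕ} (hlam : IsPartition lam) (hmu : IsPartition mu)
    (h : ∃ i, part mu i < part lam i) :
    ∃ i < lam.length, ∃ j < part lam i, conjPart lam j = i + 1 ∧ part mu i = j := by
  obtain ⟨i0, hi0⟩ := h
  set P : ℕ → Prop := fun i => part mu i < part lam i with hP
  have hi0len : i0 < lam.length := lt_length_of_part_ne (by omega)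
  set M := Nat.findGreatest P lam.length with hM
  have hPM : P M := Nat.findGreatest_spec (le_of_lt hi0len) hi0
  have hMlen : M < lam.length := lt_length_of_part_ne (by
    have := hPM
    simp only [hP] at this
    omega)
  refine ⟨M, hMlen, part mu M, hPM, ?_, rfl⟩
  have hge : M + 1 ≤ conjPart lam (part mu M) := lt_conjPart hlam.1 hPM
  have hnotP : ¬ P (M + 1) :=
    Nat.findGreatest_is_greatest (Nat.lt_succ_self M) (by omega)
  have hle2 : part lam (M + 1) ≤ part mu M := by
    have h1 : part lam (M + 1) ≤ part mu (M + 1) := by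
      simp only [hP] at hnotP; omega
    have h2 : part mu (M + 1) ≤ part mu M := part_mono hmu.1 (Nat.le_succ M)
    omega
  have hle : conjPart lam (part mu M) ≤ M + 1 := conjPart_le hlam.1 hle2
  omega

theorem stmt4 (q : ℂ) (hq : q ≠ 0) (hroot : ∀ m : ℤ, m ≠ 0 → q ^ m ≠ 1)
    (lam mu : List ℕ) (hlam : IsPartition lam) (hmu : IsPartition mu) :
    nek q 1 lam mu ≠ 0 ↔ lam = mu := by
  constructor
  · intro hne
    by_contra hneq
    apply hne
    have hex : ∃ i, part lam i ≠ part mu i := by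
      by_contra hc
      push_neg at hc
      exact hneq (part_ext hlam hmu hc)
    obtain ⟨i0, hi0⟩ := hex
    rcases Nat.lt_or_ge (part mu i0) (part lam i0) with hcase | hcase
    · -- first product vanishes
      obtain ⟨i, hi, j, hj, hc, hpm⟩ := exists_zero_cell hlam hmu ⟨i0, hcase⟩
      unfold nek
      apply mul_eq_zero_of_left
      apply Finset.prod_eq_zero (Finset.mem_range.mpr hi)
      apply Finset.prod_eq_zero (Finset.mem_range.mpr hj)
      have he : -((conjPart lam j : ℤ) - ((i : ℤ) + 1)) - ((part mu i : ℤ) - ((j : ℤ) + 1)) - 1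
          = 0 := by
        rw [hc, hpm]
        push_cast
        ring
      rw [he]
      simp
    · -- second product vanishes
      have hcase' : part lam i0 < part mu i0 := by omega
      obtain ⟨i, hi, j, hj, hc, hpm⟩ := exists_zero_cell hmu hlam ⟨i0, hcase'⟩
      unfold nek
      apply mul_eq_zero_of_right
      apply Finset.prod_eq_zero (Finset.mem_range.mpr hi)
      apply Finset.prod_eq_zero (Finset.mem_range.mpr hj)
      have he : ((conjPart mu j : ℤ) - ((i : ℤ) + 1)) + ((part lam i : ℤ) - ((j : ℤ) + 1)) + 1
          = 0 := by
        rw [hc, hpm]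
        push_cast
        ring
      rw [he]
      simp
  · intro h
    subst h
    unfold nek
    apply mul_ne_zero
    · rw [Finset.prod_ne_zero_iff]
      intro i hi
      rw [Finset.prod_ne_zero_iff]
      intro j hj
      rw [Finset.mem_range] at hi hj
      have hcl : i + 1 ≤ conjPart lam j := lt_conjPart hlam.1 hj
      have he : -((conjPart lam j : ℤ) - ((i : ℤ) + 1)) - ((part lam i : ℤ) - ((j : ℤ) + 1)) - 1
          ≠ 0 := by omega
      intro hzero
      apply hroot _ he
      have : (1 : ℂ) - q ^ (-((conjPart lam j : ℤ) - ((i : ℤ) + 1)) -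
          ((part lam i : ℤ) - ((j : ℤ) + 1)) - 1) = 0 := by
        rw [← hzero]; ring
      linear_combination -this
    · rw [Finset.prod_ne_zero_iff]
      intro i hi
      rw [Finset.prod_ne_zero_iff]
      intro j hj
      rw [Finset.mem_range] at hi hj
      have hcl : i + 1 ≤ conjPart lam j := lt_conjPart hlam.1 hj
      have he : ((conjPart lam j : ℤ) - ((i : ℤ) + 1)) + ((part lam i : ℤ) - ((j : ℤ) + 1)) + 1
          ≠ 0 := by omega
      intro hzero
      apply hroot _ he
      have : (1 : ℂ) - q ^ (((conjPart lam j : ℤ) - ((i : ℤ) + 1)) +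
          ((part lam i : ℤ) - ((j : ℤ) + 1)) + 1) = 0 := by
        rw [← hzero]; ring
      linear_combination -this
end

section
/- For partitions λ, μ, the Nekrasov factor satisfies N_{λ,μ}(q^{-1}) ≠ 0 if and only if λ = r_n(μ) for some n ≥ 0, where r_n(μ) = (μ_1+1, …, μ_n+1, μ_{n+2}, μ_{n+3}, …) is obtained by adding 1 to the first n parts and deleting the (n+1)-st part. (Assume q is not a root of unity.) -/
open Finset

namespace NekAux

lemma part_cons_succ (a : ℕ) (t : List ℕ) (k : ℕ) : part (a :: t) (k+1) = part t k := rfl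

lemma part_eq_zero {l : List ℕ} {i : ℕ} (h : l.length ≤ i) : part l i = 0 := by
  rw [part, List.getD_eq_default]; exact h

lemma lt_length_of_part_pos {l : List ℕ} {i : ℕ} (h : 0 < part l i) : i < l.length := by
  by_contra hc
  rw [part_eq_zero (le_of_not_gt hc)] at h
  exact absurd h (lt_irrefl 0)

lemma part_mem {l : List ℕ} {i : ℕ} (h : i < l.length) : part l i ∈ l := by
  rw [part, List.getD_eq_getElem _ _ h]
  exact List.getElem_mem h

lemma part_anti {l : List ℕ} (hl : l.Pairwise (· ≥ ·)) {i j : ℕ} (hij : i ≤ j) :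
    part l j ≤ part l i := by
  by_cases hj : j < l.length
  · rw [part, part, List.getD_eq_getElem _ _ hj,
      List.getD_eq_getElem _ _ (lt_of_le_of_lt hij hj)]
    rcases eq_or_lt_of_le hij with rfl | hij'
    · exact le_refl _
    · exact List.Pairwise.rel_get_of_lt hl (by simpa using hij')
  · rw [part_eq_zero (le_of_not_gt hj)]
    exact Nat.zero_le _

lemma conjPart_zero_of_all {j : ℕ} {t : List ℕ} (h : ∀ b ∈ t, b ≤ j) : conjPart t j = 0 := by
  simp only [conjPart, List.length_eq_zero_iff, List.filter_eq_nil_iff]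
  intro b hb
  simpa using h b hb

/-- Galois duality: `i < λ'_j ↔ j < λ_i`. -/
lemma galois {l : List ℕ} (hl : l.Pairwise (· ≥ ·)) (i j : ℕ) :
    i < conjPart l j ↔ j < part l i := by
  induction l generalizing i with
  | nil => simp [conjPart, part]
  | cons a t ih =>
    have ht : t.Pairwise (· ≥ ·) := hl.of_cons
    have hmem : ∀ b ∈ t, b ≤ a := fun b hb => List.rel_of_pairwise_cons hl hb
    by_cases hja : j < a
    · have hc : conjPart (a :: t) j = conjPart t j + 1 := by
        simp [conjPart, List.filter_cons, hja]
      cases i with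
      | zero => simpa [hc, part] using hja
      | succ i => rw [hc, part_cons_succ, Nat.succ_lt_succ_iff]; exact ih ht i
    · have hc : conjPart (a :: t) j = 0 := by
        apply conjPart_zero_of_all
        intro b hb
        rcases List.mem_cons.1 hb with rfl | hb'
        · exact le_of_not_gt hja
        · exact le_trans (hmem b hb') (le_of_not_gt hja)
      rw [hc]
      cases i with
      | zero => simpa [part] using hja
      | succ i =>
        rw [part_cons_succ]
        simp only [Nat.not_lt_zero, false_iff, not_lt]
        calc part t i ≤ part t 0 := part_anti ht (Nat.zero_le i)
        _ ≤ a := by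
            by_cases h0 : 0 < t.length
            · exact hmem _ (part_mem h0)
            · rw [part_eq_zero (le_of_not_gt h0)]; exact Nat.zero_le a
        _ ≤ j := le_of_not_gt hja

lemma part_drop (l : List ℕ) (m k : ℕ) : part (l.drop m) k = part l (m + k) := by
  induction m generalizing l with
  | zero => simp
  | succ m ih =>
    cases l with
    | nil => simp [part]
    | cons a t =>
      rw [List.drop_succ_cons, ih t, Nat.succ_add, part_cons_succ]

lemma part_rn (n : ℕ) (l : List ℕ) (i : ℕ) :
    part (rn n l) i = if i < n then part l i + 1 else part l (i + 1) := by
  unfold rn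
  split_ifs with h
  · rw [part, List.getD_append _ _ _ _ (by simpa using h)]
    have : ((List.range n).map (fun i => part l i + 1))[i]'(by simpa using h) = part l i + 1 := by
      simp
    rw [List.getD_eq_getElem _ _ (by simpa using h), this]
  · rw [part, List.getD_append_right _ _ _ _ (by simpa using le_of_not_gt h)]
    simp only [List.length_map, List.length_range]
    rw [← part, part_drop]
    congr 1
    omega

lemma part_ext : ∀ (l₁ l₂ : List ℕ), (∀ p ∈ l₁, 0 < p) → (∀ p ∈ l₂, 0 < p) →
    (∀ i, part l₁ i = part l₂ i) → l₁ = l₂ := by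
  intro l₁
  induction l₁ with
  | nil =>
    intro l₂ _ h2 h
    cases l₂ with
    | nil => rfl
    | cons b t =>
      exfalso
      have h0 := h 0
      simp [part] at h0
      have hb := h2 b (List.mem_cons_self)
      omega
  | cons a t ih =>
    intro l₂ h1 h2 h
    cases l₂ with
    | nil =>
      exfalso
      have h0 := h 0
      simp [part] at h0
      have ha := h1 a (List.mem_cons_self)
      omega
    | cons b t₂ =>
      have hab : a = b := by have := h 0; simpa [part] using this
      have htt : t = t₂ := by
        apply ih t₂ (fun p hp => h1 p (List.mem_cons_of_mem a hp))
          (fun p hp => h2 p (List.mem_cons_of_mem b hp))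
        intro i
        have := h (i+1)
        rwa [part_cons_succ, part_cons_succ] at this
      rw [hab, htt]


variable {lam mu : List ℕ}


lemma A_imp_upper (hl : lam.Pairwise (· ≥ ·)) (hm : mu.Pairwise (· ≥ ·))
    (hA : ∀ i j, j < part lam i → conjPart lam j + part mu i ≠ i + j) :
    ∀ i, part lam i ≤ part mu i + 1 := by
  by_contra hc
  push_neg at hc
  obtain ⟨i, hi⟩ := hc
  have step : ∀ k, part mu (i + k) + 2 ≤ part lam (i + k) := by
    intro k
    induction k with
    | zero => simp only [Nat.add_zero]; omega
    | succ k ih =>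
      have hj : part mu (i + k) + 1 < part lam (i + k) := by omega
      have hA' := hA (i + k) (part mu (i + k) + 1) hj
      have hg : i + k < conjPart lam (part mu (i + k) + 1) := (galois hl _ _).2 hj
      have hg2 : i + k + 1 < conjPart lam (part mu (i + k) + 1) := by omega
      have hgt := (galois hl (i + k + 1) _).1 hg2
      have hmono : part mu (i + k + 1) ≤ part mu (i + k) := part_anti hm (Nat.le_succ _)
      show part mu (i + k + 1) + 2 ≤ part lam (i + k + 1)
      omega
  have h1 := step lam.length
  have h2 : part lam (i + lam.length) = 0 := part_eq_zero (by omega)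
  omega

lemma B_imp_lower (hl : lam.Pairwise (· ≥ ·)) (hm : mu.Pairwise (· ≥ ·))
    (hB : ∀ i j, j < part mu i → conjPart mu j + part lam i ≠ i + j + 2) :
    ∀ i, part mu (i + 1) ≤ part lam i := by
  by_contra hc
  push_neg at hc
  obtain ⟨i, hi⟩ := hc
  have step : ∀ k, part lam (i + k) < part mu (i + k + 1) := by
    intro k
    induction k with
    | zero => simpa using hi
    | succ k ih =>
      have hjm : part lam (i + k) < part mu (i + k) :=
        lt_of_lt_of_le ih (part_anti hm (Nat.le_succ _))
      have hB' := hB (i + k) (part lam (i + k)) hjm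
      have hg : i + k + 1 < conjPart mu (part lam (i + k)) := (galois hm _ _).2 ih
      have hg2 : i + k + 2 < conjPart mu (part lam (i + k)) := by omega
      have hgt := (galois hm (i + k + 2) _).1 hg2
      have hmono : part lam (i + k + 1) ≤ part lam (i + k) := part_anti hl (Nat.le_succ _)
      show part lam (i + k + 1) < part mu (i + k + 2)
      omega
  have h1 := step mu.length
  have h2 : part mu (i + mu.length + 1) = 0 := part_eq_zero (by omega)
  omega

lemma B_imp_eq (hl : lam.Pairwise (· ≥ ·)) (hm : mu.Pairwise (· ≥ ·))
    (hB : ∀ i j, j < part mu i → conjPart mu j + part lam i ≠ i + j + 2) :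
    ∀ i, part lam i ≤ part mu i → part lam i = part mu (i + 1) := by
  intro i hle
  have hlow := B_imp_lower hl hm hB i
  by_contra hne
  have hgt : part mu (i + 1) < part lam i := by omega
  have hLpos : 0 < part lam i := by omega
  have hjm : part lam i - 1 < part mu i := by omega
  have hB' := hB i (part lam i - 1) hjm
  have hg : i < conjPart mu (part lam i - 1) := (galois hm _ _).2 hjm
  have hg2 : i + 1 < conjPart mu (part lam i - 1) := by omega
  have hgt2 := (galois hm (i + 1) _).1 hg2
  omega

lemma C_of_AB (hl : lam.Pairwise (· ≥ ·)) (hm : mu.Pairwise (· ≥ ·))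
    (hA : ∀ i j, j < part lam i → conjPart lam j + part mu i ≠ i + j)
    (hB : ∀ i j, j < part mu i → conjPart mu j + part lam i ≠ i + j + 2) :
    ∀ i, part lam i = part mu i + 1 ∨ part lam i = part mu (i + 1) := by
  intro i
  by_cases h : part lam i = part mu i + 1
  · exact Or.inl h
  · have h1 := A_imp_upper hl hm hA i
    exact Or.inr (B_imp_eq hl hm hB i (by omega))

lemma A_of_C (hl : lam.Pairwise (· ≥ ·)) (hm : mu.Pairwise (· ≥ ·))
    (hC : ∀ i, part lam i = part mu i + 1 ∨ part lam i = part mu (i + 1)) :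
    ∀ i j, j < part lam i → conjPart lam j + part mu i ≠ i + j := by
  intro i j hj
  have hg : i < conjPart lam j := (galois hl _ _).2 hj
  have hup : part lam i ≤ part mu i + 1 := by
    rcases hC i with h | h
    · omega
    · have : part mu (i+1) ≤ part mu i := part_anti hm (by omega)
      omega
  omega

lemma B_of_C (hl : lam.Pairwise (· ≥ ·)) (hm : mu.Pairwise (· ≥ ·))
    (hC : ∀ i, part lam i = part mu i + 1 ∨ part lam i = part mu (i + 1)) :
    ∀ i j, j < part mu i → conjPart mu j + part lam i ≠ i + j + 2 := by
  intro i j hj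
  have hg : i < conjPart mu j := (galois hm _ _).2 hj
  rcases hC i with h | h
  · omega
  · rw [h]
    intro heq
    by_cases hc : j < part mu (i + 1)
    · have hg2 : i + 1 < conjPart mu j := (galois hm _ _).2 hc
      omega
    · have hg2 : ¬ (i + 1 < conjPart mu j) := fun hcon => hc ((galois hm _ _).1 hcon)
      omega

lemma rn_pos (hmu : IsPartition mu) (n : ℕ) : ∀ p ∈ rn n mu, 0 < p := by
  intro p hp
  rcases List.mem_append.1 hp with h | h
  · obtain ⟨i, _, rfl⟩ := List.mem_map.1 h
    omega
  · exact hmu.2 p (List.mem_of_mem_drop h)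

lemma C_iff_rn (hlam : IsPartition lam) (hmu : IsPartition mu) :
    (∀ i, part lam i = part mu i + 1 ∨ part lam i = part mu (i + 1)) ↔
    ∃ n, lam = rn n mu := by
  constructor
  · intro hC
    have hex : ∃ i, ¬ part lam i = part mu i + 1 :=
      ⟨lam.length, by rw [part_eq_zero le_rfl]; omega⟩
    refine ⟨Nat.find hex, part_ext _ _ hlam.2 (rn_pos hmu _) ?_⟩
    have hn : ¬ part lam (Nat.find hex) = part mu (Nat.find hex) + 1 := Nat.find_spec hex
    have hlt : ∀ i < Nat.find hex, part lam i = part mu i + 1 := by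
      intro i hi
      have := Nat.find_min hex hi
      tauto
    have hge : ∀ k, part lam (Nat.find hex + k) = part mu (Nat.find hex + k + 1) := by
      intro k
      induction k with
      | zero =>
        rcases hC (Nat.find hex) with h | h
        · exact absurd h hn
        · simpa using h
      | succ k ih =>
        rcases hC (Nat.find hex + k + 1) with h | h
        · exfalso
          have h1 : part lam (Nat.find hex + k + 1) ≤ part lam (Nat.find hex + k) :=
            part_anti hlam.1 (Nat.le_succ _)
          have h2 : part mu (Nat.find hex + k + 1) ≤ part mu (Nat.find hex + k + 1) := le_rfl
          omega
        · exact h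
    intro i
    rw [part_rn]
    split_ifs with h
    · exact hlt i h
    · obtain ⟨k, rfl⟩ : ∃ k, i = Nat.find hex + k := ⟨i - Nat.find hex, by omega⟩
      exact hge k
  · rintro ⟨n, rfl⟩
    intro i
    rw [part_rn]
    split_ifs with h
    · exact Or.inl rfl
    · exact Or.inr rfl


lemma factor_ne {q : ℂ} (hq : q ≠ 0) (hroot : ∀ m : ℤ, m ≠ 0 → q ^ m ≠ 1) (e : ℤ) :
    (1 - q ^ e * q⁻¹ ≠ 0) ↔ e ≠ 1 := by
  have hqe : q ^ e * q⁻¹ = q ^ (e - 1) := by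
    rw [zpow_sub₀ hq, zpow_one, div_eq_mul_inv]
  rw [hqe, sub_ne_zero, ne_comm]
  constructor
  · intro h
    rintro rfl
    exact h (by norm_num)
  · intro he h
    exact hroot (e - 1) (by omega) h


end NekAux

theorem stmt5 (q : ℂ) (hq : q ≠ 0) (hroot : ∀ m : ℤ, m ≠ 0 → q ^ m ≠ 1)
    (lam mu : List ℕ) (hlam : IsPartition lam) (hmu : IsPartition mu) :
    nek q q⁻¹ lam mu ≠ 0 ↔ ∃ n : ℕ, lam = rn n mu := by
  have hnek : nek q q⁻¹ lam mu ≠ 0 ↔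
      (∀ i j, j < part lam i → conjPart lam j + part mu i ≠ i + j) ∧
      (∀ i j, j < part mu i → conjPart mu j + part lam i ≠ i + j + 2) := by
    unfold nek
    rw [mul_ne_zero_iff]
    simp only [Finset.prod_ne_zero_iff, Finset.mem_range, NekAux.factor_ne hq hroot]
    constructor
    · rintro ⟨h1, h2⟩
      refine ⟨fun i j hj => ?_, fun i j hj => ?_⟩
      · have hi : i < lam.length :=
          NekAux.lt_length_of_part_pos (Nat.lt_of_le_of_lt (Nat.zero_le j) hj)
        have := h1 i hi j hj
        omega
      · have hi : i < mu.length :=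
          NekAux.lt_length_of_part_pos (Nat.lt_of_le_of_lt (Nat.zero_le j) hj)
        have := h2 i hi j hj
        omega
    · rintro ⟨h1, h2⟩
      refine ⟨fun i _ j hj => ?_, fun i _ j hj => ?_⟩
      · have := h1 i j hj
        omega
      · have := h2 i j hj
        omega
  rw [hnek, ← NekAux.C_iff_rn hlam hmu]
  constructor
  · rintro ⟨hA, hB⟩
    exact NekAux.C_of_AB hlam.1 hmu.1 hA hB
  · intro hC
    exact ⟨NekAux.A_of_C hlam.1 hmu.1 hC, NekAux.B_of_C hlam.1 hmu.1 hC⟩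
end

section
/- The connection matrix is invariant under simultaneous shifts σ₂ ↦ σ₂ + h_i and σ₀ ↦ σ₀ + h_j for any 1 ≤ i, j ≤ N: B[θ₁, 1/N; σ₂+h_i, σ₀+h_j | x] = B[θ₁, 1/N; σ₂, σ₀ | x], where h_i ∈ ℂ^N has components (h_i)^{(j)} = δ_{ij} − 1/N. -/
open Finset

noncomputable section

/-- (a;q)_∞ = ∏_{j≥0} (1 - a q^j). -/
def qPochInf (a q : ℂ) : ℂ := ∏' j : ℕ, (1 - a * q ^ j)

/-- (a;q,q)_∞ = ∏_{j,k≥0} (1 - a q^{j+k}). -/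
def qPochInf2 (a q : ℂ) : ℂ := ∏' p : ℕ × ℕ, (1 - a * q ^ (p.1 + p.2))

/-- ϑ(u) = q^{u(u-1)/2} (q^u;q)_∞ (q^{1-u};q)_∞ (q;q)_∞, with q^u = exp(u log q). -/
def theta (q u : ℂ) : ℂ :=
  q ^ (u * (u - 1) / 2) * (qPochInf (q ^ u) q * qPochInf (q ^ (1 - u)) q * qPochInf q q)

/-- Γ_q(u) = (q;q)_∞/(q^u;q)_∞ · (1-q)^{1-u}. -/
def qGamma (q u : ℂ) : ℂ := qPochInf q q / qPochInf (q ^ u) q * (1 - q) ^ ((1 : ℂ) - u)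

/-- G_q(u) = (q^u;q,q)_∞/(q;q,q)_∞ · (q;q)_∞^{u-1} · (1-q)^{-(u-1)(u-2)/2}. -/
def qBarnes (q u : ℂ) : ℂ :=
  qPochInf2 (q ^ u) q / qPochInf2 q q * (qPochInf q q) ^ (u - 1) *
    (1 - q) ^ (-(u - 1) * (u - 2) / 2)

/-- The weight h_i of the vector representation: (h_i)^{(j)} = δ_{ij} - 1/N. -/
def hvec (N : ℕ) (i : Fin N) : Fin N → ℂ := fun j => (if j = i then 1 else 0) - 1 / (N : ℂ)

/-- The connection matrix B[θ₁, 1/N; σ₂, σ₀ | q^u], entries B_{j,i}. -/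
def connB (q : ℂ) (N : ℕ) (th : ℂ) (s2 s0 : Fin N → ℂ) (u : ℂ) : Matrix (Fin N) (Fin N) ℂ :=
  Matrix.of fun j i =>
    theta q (1 - 1 / (N : ℂ) + s2 i + ((N : ℂ) - 1) * th - s0 j + u) / theta q ((N : ℂ) * th + u)
      * (∏ k ∈ Finset.univ.erase i, theta q (1 / (N : ℂ) - s2 k + th + s0 j))
      / ∏ k ∈ Finset.univ.erase j, theta q (s0 j - s0 k)

end

lemma summable_log_aux (a q : ℂ) (hq1 : ‖q‖ < 1) (h0 : ∀ j : ℕ, 1 - a * q ^ j ≠ 0) :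
    Summable fun j : ℕ => Complex.log (1 - a * q ^ j) := by
  have hgeo : Summable fun j : ℕ => (3/2 : ℝ) * (‖a‖ * ‖q‖ ^ j) :=
    ((summable_geometric_of_lt_one (norm_nonneg q) hq1).mul_left ‖a‖).mul_left _
  have htend : Filter.Tendsto (fun j : ℕ => ‖a‖ * ‖q‖ ^ j) Filter.atTop (nhds 0) := by
    simpa using (tendsto_pow_atTop_nhds_zero_of_norm_lt_one (by simpa using hq1)).const_mul ‖a‖
  have hev : ∀ᶠ j in Filter.atTop, ‖a * q ^ j‖ ≤ 1/2 := by
    filter_upwards [htend.eventually (eventually_le_nhds (by norm_num : (0:ℝ) < 1/2))] with j hj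
    calc ‖a * q ^ j‖ = ‖a‖ * ‖q‖ ^ j := by rw [norm_mul, norm_pow]
    _ ≤ 1/2 := hj
  apply Summable.of_norm_bounded_eventually_nat (g := fun j => (3/2 : ℝ) * (‖a‖ * ‖q‖ ^ j)) hgeo
  filter_upwards [hev] with j hj
  have : (1 : ℂ) - a * q ^ j = 1 + (-(a * q ^ j)) := by ring
  rw [this]
  calc ‖Complex.log (1 + (-(a * q ^ j)))‖ ≤ 3/2 * ‖-(a * q ^ j)‖ :=
        Complex.norm_log_one_add_half_le_self (by rwa [norm_neg])
  _ = 3/2 * (‖a‖ * ‖q‖ ^ j) := by rw [norm_neg, norm_mul, norm_pow]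

lemma multipliable_aux (a q : ℂ) (hq1 : ‖q‖ < 1) :
    Multipliable fun j : ℕ => 1 - a * q ^ j := by
  by_cases h0 : ∀ j : ℕ, 1 - a * q ^ j ≠ 0
  · exact Complex.multipliable_of_summable_log (summable_log_aux a q hq1 h0)
  · push_neg at h0
    obtain ⟨j0, hj0⟩ := h0
    refine ⟨0, ?_⟩
    have hev : ∀ᶠ s in Filter.atTop, ∏ k ∈ s, (1 - a * q ^ k) = 0 := by
      filter_upwards [Filter.eventually_ge_atTop {j0}] with s hs
      exact Finset.prod_eq_zero (hs (Finset.mem_singleton_self j0)) hj0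
    exact Filter.Tendsto.congr' (Filter.EventuallyEq.symm hev) tendsto_const_nhds

set_option maxHeartbeats 1000000 in
lemma qPochInf_rec (a q : ℂ) (hq1 : ‖q‖ < 1) :
    qPochInf a q = (1 - a) * qPochInf (a * q) q := by
  have hm : Multipliable fun n : ℕ => 1 - a * q ^ (n + 1) :=
    (multipliable_aux (a * q) q hq1).congr fun j => by rw [pow_succ]; ring
  rw [qPochInf, tprod_eq_zero_mul' hm]
  simp only [pow_zero, mul_one]
  congr 1
  rw [qPochInf]
  exact tprod_congr fun j => by rw [pow_succ]; ring

lemma theta_add_one (q : ℂ) (hq0 : q ≠ 0) (hq1 : ‖q‖ < 1) (u : ℂ) :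
    theta q (u + 1) = - theta q u := by
  have h1 : q ^ (u + 1) = q ^ u * q := by rw [Complex.cpow_add _ _ hq0, Complex.cpow_one]
  have h2 : (1 : ℂ) - (u + 1) = -u := by ring
  have h3 : q ^ ((1:ℂ) - u) = q ^ (-u) * q := by
    rw [show (1:ℂ) - u = -u + 1 by ring, Complex.cpow_add _ _ hq0, Complex.cpow_one]
  have hpow : q ^ ((u+1) * ((u+1) - 1) / 2) = q ^ (u * (u - 1) / 2) * q ^ u := by
    rw [← Complex.cpow_add _ _ hq0]; congr 1; ring
  have h8 : q ^ u * q ^ (-u) = 1 := by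
    rw [← Complex.cpow_add _ _ hq0, add_neg_cancel, Complex.cpow_zero]
  have h6 : qPochInf (q ^ u) q = (1 - q ^ u) * qPochInf (q ^ u * q) q := qPochInf_rec _ _ hq1
  have h7 : qPochInf (q ^ (-u)) q = (1 - q ^ (-u)) * qPochInf (q ^ (-u) * q) q :=
    qPochInf_rec _ _ hq1
  rw [theta, theta, h2, hpow, h1, h3, h6, h7]
  linear_combination (-(q ^ (u * (u - 1) / 2) * qPochInf (q ^ u * q) q *
    qPochInf (q ^ (-u) * q) q * qPochInf q q)) * h8

lemma theta_sub_one (q : ℂ) (hq0 : q ≠ 0) (hq1 : ‖q‖ < 1) (u : ℂ) :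
    theta q (u - 1) = - theta q u := by
  have := theta_add_one q hq0 hq1 (u - 1)
  rw [sub_add_cancel] at this
  rw [this, neg_neg]
lemma theta_shift (q : ℂ) (hq0 : q ≠ 0) (hq1 : ‖q‖ < 1) (v : ℂ) (P Q : Prop)
    [Decidable P] [Decidable Q] :
    theta q (v + (if P then (1:ℂ) else 0) - (if Q then (1:ℂ) else 0)) =
      (if P then (-1:ℂ) else 1) * (if Q then (-1:ℂ) else 1) * theta q v := by
  by_cases hP : P <;> by_cases hQ : Q <;> simp [hP, hQ]
  · exact theta_add_one q hq0 hq1 v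
  · exact theta_sub_one q hq0 hq1 v

set_option maxHeartbeats 2000000 in
theorem stmt13 (q : ℂ) (hq0 : q ≠ 0) (hq1 : ‖q‖ < 1) (N : ℕ) (hN : 2 ≤ N)
    (th : ℂ) (s2 s0 : Fin N → ℂ) (u : ℂ)
    (hden1 : theta q ((N : ℂ) * th + u) ≠ 0)
    (hden2 : ∀ j k : Fin N, j ≠ k → theta q (s0 j - s0 k) ≠ 0)
    (i j : Fin N) :
    connB q N th (s2 + hvec N i) (s0 + hvec N j) u = connB q N th s2 s0 u := by
  apply Matrix.ext; intro j' i'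
  simp only [connB, Matrix.of_apply, Pi.add_apply, hvec]
  set A : ℂ := theta q (1 - 1/(N:ℂ) + s2 i' + ((N:ℂ)-1)*th - s0 j' + u) with hA
  set D : ℂ := theta q ((N:ℂ)*th + u) with hD
  -- numerator
  have e1 : theta q (1 - 1/(N:ℂ) + (s2 i' + ((if i' = i then (1:ℂ) else 0) - 1/(N:ℂ)))
      + ((N:ℂ)-1)*th - (s0 j' + ((if j' = j then (1:ℂ) else 0) - 1/(N:ℂ))) + u)
      = (if i' = i then (-1:ℂ) else 1) * (if j' = j then (-1:ℂ) else 1) * A := by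
    rw [show (1 - 1/(N:ℂ) + (s2 i' + ((if i' = i then (1:ℂ) else 0) - 1/(N:ℂ)))
      + ((N:ℂ)-1)*th - (s0 j' + ((if j' = j then (1:ℂ) else 0) - 1/(N:ℂ))) + u)
      = (1 - 1/(N:ℂ) + s2 i' + ((N:ℂ)-1)*th - s0 j' + u)
        + (if i' = i then (1:ℂ) else 0) - (if j' = j then (1:ℂ) else 0) from by ring]
    exact theta_shift q hq0 hq1 _ _ _
  have e2 : ∀ k, theta q (1/(N:ℂ) - (s2 k + ((if k = i then (1:ℂ) else 0) - 1/(N:ℂ)))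
      + th + (s0 j' + ((if j' = j then (1:ℂ) else 0) - 1/(N:ℂ))))
      = (if j' = j then (-1:ℂ) else 1) * (if k = i then (-1:ℂ) else 1)
        * theta q (1/(N:ℂ) - s2 k + th + s0 j') := by
    intro k
    rw [show (1/(N:ℂ) - (s2 k + ((if k = i then (1:ℂ) else 0) - 1/(N:ℂ)))
      + th + (s0 j' + ((if j' = j then (1:ℂ) else 0) - 1/(N:ℂ))))
      = (1/(N:ℂ) - s2 k + th + s0 j')
        + (if j' = j then (1:ℂ) else 0) - (if k = i then (1:ℂ) else 0) from by ring]
    exact theta_shift q hq0 hq1 _ _ _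
  have e3 : ∀ k, theta q ((s0 j' + ((if j' = j then (1:ℂ) else 0) - 1/(N:ℂ)))
      - (s0 k + ((if k = j then (1:ℂ) else 0) - 1/(N:ℂ))))
      = (if j' = j then (-1:ℂ) else 1) * (if k = j then (-1:ℂ) else 1)
        * theta q (s0 j' - s0 k) := by
    intro k
    rw [show ((s0 j' + ((if j' = j then (1:ℂ) else 0) - 1/(N:ℂ)))
      - (s0 k + ((if k = j then (1:ℂ) else 0) - 1/(N:ℂ))))
      = (s0 j' - s0 k)
        + (if j' = j then (1:ℂ) else 0) - (if k = j then (1:ℂ) else 0) from by ring]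
    exact theta_shift q hq0 hq1 _ _ _
  rw [e1]
  rw [Finset.prod_congr rfl (fun k _ => e2 k), Finset.prod_congr rfl (fun k _ => e3 k)]
  rw [Finset.prod_mul_distrib, Finset.prod_mul_distrib, Finset.prod_mul_distrib,
    Finset.prod_mul_distrib, Finset.prod_const, Finset.prod_const]
  have hcard : ∀ m : Fin N, (Finset.univ.erase m).card = N - 1 := fun m => by
    rw [Finset.card_erase_of_mem (Finset.mem_univ m), Finset.card_univ, Fintype.card_fin]
  rw [hcard i', hcard j']
  have pI : ∏ k ∈ Finset.univ.erase i', (if k = i then (-1:ℂ) else 1)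
      = if i' = i then 1 else -1 := by
    rcases eq_or_ne i' i with h | h
    · subst h
      rw [if_pos rfl]
      exact Finset.prod_eq_one fun k hk => if_neg (Finset.mem_erase.mp hk).1
    · rw [if_neg h]
      rw [Finset.prod_eq_single_of_mem i (Finset.mem_erase.mpr ⟨Ne.symm h, Finset.mem_univ i⟩)
        (fun b _ hb => if_neg hb)]
      exact if_pos rfl
  have pJ : ∏ k ∈ Finset.univ.erase j', (if k = j then (-1:ℂ) else 1)
      = if j' = j then 1 else -1 := by
    rcases eq_or_ne j' j with h | h
    · subst h
      rw [if_pos rfl]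
      exact Finset.prod_eq_one fun k hk => if_neg (Finset.mem_erase.mp hk).1
    · rw [if_neg h]
      rw [Finset.prod_eq_single_of_mem j (Finset.mem_erase.mpr ⟨Ne.symm h, Finset.mem_univ j⟩)
        (fun b _ hb => if_neg hb)]
      exact if_pos rfl
  rw [pI, pJ]
  have hSne : (∏ k ∈ Finset.univ.erase j', theta q (s0 j' - s0 k)) ≠ 0 :=
    Finset.prod_ne_zero_iff.mpr fun k hk => hden2 j' k (Ne.symm (Finset.mem_erase.mp hk).1)
  have hm1 : ((-1:ℂ)) ^ (N - 1) ≠ 0 := pow_ne_zero _ (by norm_num)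
  rcases eq_or_ne i' i with hi | hi <;> rcases eq_or_ne j' j with hj | hj
  · subst hi; subst hj
    simp only [if_pos rfl, if_true, mul_one]
    field_simp [hm1, hSne]
  · subst hi
    simp only [if_pos rfl, if_true, if_neg hj, one_pow, one_mul, mul_one]
    field_simp [hSne]
  · subst hj
    simp only [if_pos rfl, if_true, if_neg hi, mul_one, one_mul]
    field_simp [hm1, hSne]
  · simp only [if_neg hi, if_neg hj, one_pow, one_mul, mul_one]
    field_simp [hSne]
end

section
/- Let λ, μ be partitions with ℓ = ℓ(λ), k = ℓ(μ), n ∈ ℤ_{≥0}, and η = r_n(λ). Then for all u ∈ ℂ: N_{μ,λ}(u)/N_{μ,η}(qu) = N_{μ̄,λ}(qu)/N_{μ̄,η}(q²u) · (1 − q^{|η|−|λ|+1−k}u)/(1 − qu), interpreted as the polynomial identity N_{μ,λ}(u)·N_{μ̄,η}(q²u)·(1−qu) = N_{μ̄,λ}(qu)·N_{μ,η}(qu)·(1 − q^{|η|−|λ|+1−k}u). -/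
open Finset

namespace S18


theorem isPartition_tail {a : ℕ} {t : List ℕ} (h : IsPartition (a :: t)) :
    IsPartition t ∧ ∀ x ∈ t, x ≤ a := by
  obtain ⟨hs, hp⟩ := h
  rw [List.pairwise_cons] at hs
  exact ⟨⟨hs.2, fun p hp' => hp p (List.mem_cons_of_mem a hp')⟩, fun x hx => hs.1 x hx⟩

theorem part_nil (i : ℕ) : part [] i = 0 := by simp [part]

theorem part_cons_zero (a : ℕ) (t : List ℕ) : part (a :: t) 0 = a := rfl

theorem part_cons_succ (a : ℕ) (t : List ℕ) (i : ℕ) : part (a :: t) (i + 1) = part t i := rfl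

theorem part_eq_zero {l : List ℕ} {i : ℕ} (h : l.length ≤ i) : part l i = 0 :=
  List.getD_eq_default _ _ h

theorem part_mem {l : List ℕ} {i : ℕ} (h : i < l.length) : part l i ∈ l := by
  rw [part, List.getD_eq_getElem l 0 h]; exact List.getElem_mem h

theorem part_le_head {a : ℕ} {t : List ℕ} (h : ∀ x ∈ t, x ≤ a) (i : ℕ) : part t i ≤ a := by
  rcases Nat.lt_or_ge i t.length with hi | hi
  · exact h _ (part_mem hi)
  · rw [part_eq_zero hi]; exact Nat.zero_le a

theorem part_anti {l : List ℕ} (hl : IsPartition l) {i j : ℕ} (h : i ≤ j) :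
    part l j ≤ part l i := by
  induction l generalizing i j with
  | nil => simp [part_nil]
  | cons a t ih =>
    obtain ⟨ht, hle⟩ := isPartition_tail hl
    cases j with
    | zero =>
      have : i = 0 := Nat.le_zero.mp h
      subst this; exact le_refl _
    | succ j =>
      cases i with
      | zero => rw [part_cons_succ, part_cons_zero]; exact part_le_head hle j
      | succ i => rw [part_cons_succ, part_cons_succ]; exact ih ht (Nat.succ_le_succ_iff.mp h)

theorem part_pos {l : List ℕ} (hl : IsPartition l) {i : ℕ} (h : i < l.length) :
    0 < part l i := hl.2 _ (part_mem h)

theorem conj_cons (a : ℕ) (t : List ℕ) (j : ℕ) :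
    conjPart (a :: t) j = (if j < a then 1 else 0) + conjPart t j := by
  simp only [conjPart, List.filter_cons]
  split <;> simp_all <;> omega

theorem lt_part_iff {l : List ℕ} (hl : IsPartition l) (i j : ℕ) :
    j < part l i ↔ i < conjPart l j := by
  induction l generalizing i with
  | nil => simp [part_nil, conjPart]
  | cons a t ih =>
    obtain ⟨ht, hle⟩ := isPartition_tail hl
    match i with
    | 0 =>
      rw [part_cons_zero, conj_cons]
      constructor
      · intro h; rw [if_pos h]; omega
      · intro h
        by_contra hc
        rw [if_neg hc] at h
        have : conjPart t j = 0 := by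
          simp only [conjPart, List.length_eq_zero_iff, List.filter_eq_nil_iff]
          intro x hx
          simp only [decide_eq_true_eq]
          have := hle x hx; omega
        omega
    | (i+1) =>
      rw [part_cons_succ, conj_cons]
      constructor
      · intro h
        have hja : j < a := lt_of_lt_of_le h (part_le_head hle i)
        have := (ih ht i).mp h
        rw [if_pos hja]; omega
      · intro h
        have hb : (if j < a then 1 else 0) ≤ 1 := by split <;> omega
        exact (ih ht i).mpr (by omega)

-- === bar lemmas ===
theorem bar_cons (a : ℕ) (t : List ℕ) :
    bar (a :: t) = if 0 < a - 1 then (a - 1) :: bar t else bar t := by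
  simp only [bar, List.map_cons, List.filter_cons]
  split
  · rename_i h; rw [if_pos]; simpa using h
  · rename_i h; rw [if_neg]; simpa using h

theorem part_bar {l : List ℕ} (hl : IsPartition l) (s : ℕ) :
    part (bar l) s = part l s - 1 := by
  induction l generalizing s with
  | nil => simp [bar, part]
  | cons a t ih =>
    obtain ⟨ht, hle⟩ := isPartition_tail hl
    rw [bar_cons]
    by_cases ha : 0 < a - 1
    · rw [if_pos ha]
      cases s with
      | zero => rfl
      | succ s => exact ih ht s
    · rw [if_neg ha]
      have ha1 : a ≤ 1 := by omega
      have hbt : bar t = [] := by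
        simp only [bar, List.filter_eq_nil_iff]
        intro x hx
        obtain ⟨y, hy, rfl⟩ := List.mem_map.mp hx
        have := hle y hy
        simp; omega
      rw [hbt]
      cases s with
      | zero => simp [part]; omega
      | succ s =>
        simp only [part, List.getD_nil, List.getD_cons_succ]
        have : part t s ≤ a := part_le_head hle s
        show 0 = part t s - 1
        omega

theorem isPartition_bar {l : List ℕ} (hl : IsPartition l) : IsPartition (bar l) := by
  constructor
  · apply List.Pairwise.sublist List.filter_sublist
    exact List.Pairwise.map _ (fun {x y} h => Nat.sub_le_sub_right h 1) hl.1
  · intro p hp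
    have := List.mem_filter.mp hp
    simpa using this.2

theorem length_bar_le (l : List ℕ) : (bar l).length ≤ l.length := by
  calc (bar l).length ≤ (l.map (fun p => p - 1)).length := (List.filter_sublist).length_le
  _ = l.length := List.length_map _

-- === rn lemmas ===
theorem part_rn_lt {n : ℕ} {l : List ℕ} {i : ℕ} (h : i < n) :
    part (rn n l) i = part l i + 1 := by
  rw [rn, part, List.getD_append _ _ _ _ (by simpa using h)]
  rw [List.getD_eq_getElem _ 0 (by simpa using h)]
  simp [h]

theorem part_rn_ge {n : ℕ} {l : List ℕ} {i : ℕ} (h : n ≤ i) :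
    part (rn n l) i = part l (i + 1) := by
  rw [rn, part, List.getD_append_right _ _ _ _ (by simpa using h)]
  simp only [List.length_map, List.length_range]
  rw [part]
  show (l.drop (n+1)).getD (i - n) 0 = l.getD (i+1) 0
  rw [List.getD, List.getD, List.getElem?_drop]
  congr 2
  omega

theorem length_rn_le (n : ℕ) (l : List ℕ) : (rn n l).length ≤ n + l.length := by
  simp only [rn, List.length_append, List.length_map, List.length_range, List.length_drop]
  omega

theorem isPartition_rn {n : ℕ} {l : List ℕ} (hl : IsPartition l) : IsPartition (rn n l) := by
  constructor
  · rw [rn]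
    apply List.pairwise_append.mpr
    refine ⟨?_, ?_, ?_⟩
    · rw [List.pairwise_map]
      apply List.Pairwise.imp_of_mem ?_ (List.pairwise_lt_range (n := n))
      intro a b _ _ hab
      have := part_anti hl (Nat.le_of_lt hab)
      omega
    · exact List.Pairwise.sublist (List.drop_sublist _ _) hl.1
    · intro a ha b hb
      obtain ⟨i, hi, rfl⟩ := List.mem_map.mp ha
      obtain ⟨m, hmlt, rfl⟩ := List.mem_iff_getElem.mp hb
      have hlen : n + 1 + m < l.length := by
        rw [List.length_drop] at hmlt; omega
      rw [List.getElem_drop]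
      have h1 : l[n + 1 + m]'hlen = part l (n + 1 + m) := by
        rw [part, List.getD_eq_getElem l 0 hlen]
      rw [h1]
      have := part_anti hl (show i ≤ n + 1 + m by simp at hi; omega)
      omega
  · intro p hp
    rw [rn, List.mem_append] at hp
    rcases hp with hp | hp
    · obtain ⟨i, _, rfl⟩ := List.mem_map.mp hp; omega
    · exact hl.2 p (List.mem_of_mem_drop hp)

theorem sum_range_list (f : ℕ → ℕ) (n : ℕ) :
    ((List.range n).map f).sum = ∑ i ∈ Finset.range n, f i := by
  induction n with
  | zero => simp
  | succ n ih => rw [List.range_succ, List.map_append, List.sum_append, Finset.sum_range_succ, ih]; simp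

theorem sum_take (l : List ℕ) (m : ℕ) :
    (l.take m).sum = ∑ i ∈ Finset.range m, part l i := by
  induction m with
  | zero => simp
  | succ m ih =>
    rw [Finset.sum_range_succ, ← ih]
    rcases Nat.lt_or_ge m l.length with h | h
    · rw [List.take_succ, List.sum_append]
      congr 1
      simp [List.getElem?_eq_getElem h, part, List.getD_eq_getElem l 0 h]
    · rw [List.take_of_length_le h, List.take_of_length_le (by omega), part_eq_zero h]
      simp

theorem sum_rn (n : ℕ) (l : List ℕ) : (rn n l).sum + part l n = n + l.sum := by
  have h1 : (rn n l).sum = ((List.range n).map (fun i => part l i + 1)).sum + (l.drop (n+1)).sum := by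
    rw [rn, List.sum_append]
  have h2 : (l.take (n+1)).sum + (l.drop (n+1)).sum = l.sum := List.sum_take_add_sum_drop l (n+1)
  rw [h1, sum_range_list]
  rw [sum_take] at h2
  rw [Finset.sum_range_succ] at h2
  have h3 : ∑ i ∈ Finset.range n, (part l i + 1) = (∑ i ∈ Finset.range n, part l i) + n := by
    rw [Finset.sum_add_distrib]; simp
  omega


-- ============ R-layer ============
open LaurentPolynomial

noncomputable section

abbrev R18 := LaurentPolynomial ℤ

theorem Tmul (a b : ℤ) : (T a : R18) * T b = T (a + b) := (T_add a b).symm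

/-- exponent of a cell in the first product of `nek`. -/
def e1 (A B : List ℕ) (i j : ℕ) : ℤ :=
  -((conjPart A j : ℤ) - ((i : ℤ) + 1)) - ((part B i : ℤ) - ((j : ℤ) + 1)) - 1

def e2 (A B : List ℕ) (i j : ℕ) : ℤ :=
  ((conjPart B j : ℤ) - ((i : ℤ) + 1)) + ((part A i : ℤ) - ((j : ℤ) + 1)) + 1

def Mexp (A B : List ℕ) : Multiset ℤ :=
  (Multiset.range A.length).bind
    (fun i => (Multiset.range (part A i)).map (fun j => e1 A B i j)) +
  (Multiset.range B.length).bind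
    (fun i => (Multiset.range (part B i)).map (fun j => e2 A B i j))

theorem prod_block (q u : ℂ) (L : ℕ) (g : ℕ → ℕ) (ee : ℕ → ℕ → ℤ) :
    (((Multiset.range L).bind (fun i => (Multiset.range (g i)).map (fun j => ee i j))).map
        (fun e => 1 - q ^ e * u)).prod
      = ∏ i ∈ Finset.range L, ∏ j ∈ Finset.range (g i), (1 - q ^ (ee i j) * u) := by
  rw [Multiset.map_bind, Multiset.prod_bind]
  rw [Finset.prod_eq_multiset_prod]
  rw [Finset.range_val]
  congr 1
  apply Multiset.map_congr rfl
  intro i _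
  rw [Multiset.map_map, Finset.prod_eq_multiset_prod, Finset.range_val]
  rfl

theorem nek_eq (q u : ℂ) (A B : List ℕ) :
    nek q u A B = ((Mexp A B).map (fun e => 1 - q ^ e * u)).prod := by
  rw [nek, Mexp, Multiset.map_add, Multiset.prod_add, prod_block, prod_block]
  rfl

def psi (m : Multiset ℤ) : R18 := (m.map T).sum

theorem psi_zero : psi 0 = 0 := rfl

theorem psi_cons (a : ℤ) (m : Multiset ℤ) : psi (a ::ₘ m) = T a + psi m := by
  simp [psi]

theorem psi_add (m m' : Multiset ℤ) : psi (m + m') = psi m + psi m' := by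
  simp [psi]

theorem psi_singleton (a : ℤ) : psi {a} = T a := by
  simp [psi]

theorem psi_shift (s : ℤ) (m : Multiset ℤ) : psi (m.map (· + s)) = T s * psi m := by
  induction m using Multiset.induction with
  | empty => simp [psi]
  | cons a m ih =>
    rw [Multiset.map_cons, psi_cons, psi_cons, mul_add, ← ih, Tmul]
    ring_nf

theorem psi_coeff (m : Multiset ℤ) (z : ℤ) : (psi m).coeff z = (m.count z : ℤ) := by
  induction m using Multiset.induction with
  | empty => simp [psi]
  | cons a m ih =>
    rw [psi_cons, Multiset.count_cons]
    have h1 : ((T a + psi m : R18)).coeff z = (T a : R18).coeff z + (psi m).coeff z := rfl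
    have h2 : (T a : R18).coeff z = if a = z then 1 else 0 := T_apply z a
    rw [h1, h2, ih]
    push_cast
    split_ifs with hh1 hh2 <;> omega

theorem psi_inj {m m' : Multiset ℤ} (h : psi m = psi m') : m = m' := by
  apply Multiset.ext.mpr
  intro z
  have := congrArg (fun p : R18 => p.coeff z) h
  simp only [psi_coeff] at this
  exact_mod_cast this

def g1 (l : List ℕ) (i : ℕ) : R18 :=
  ∑ j ∈ Finset.range (part l i), T ((j : ℤ) + 1 - conjPart l j)

def g2 (l : List ℕ) (i : ℕ) : R18 :=
  ∑ j ∈ Finset.range (part l i), T ((conjPart l j : ℤ) - j - 1)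

def sq (l : List ℕ) (i : ℕ) : ℤ := (part l i : ℤ) - i

theorem psi_block (L : ℕ) (g : ℕ → ℕ) (ee : ℕ → ℕ → ℤ) :
    psi ((Multiset.range L).bind (fun i => (Multiset.range (g i)).map (fun j => ee i j)))
      = ∑ i ∈ Finset.range L, ∑ j ∈ Finset.range (g i), T (ee i j) := by
  rw [psi, Multiset.map_bind, Multiset.sum_bind]
  rw [Finset.sum_eq_multiset_sum]
  rw [Finset.range_val]
  congr 1
  apply Multiset.map_congr rfl
  intro i _
  rw [Multiset.map_map, Finset.sum_eq_multiset_sum, Finset.range_val]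
  rfl

theorem psi_Mexp (A B : List ℕ) :
    psi (Mexp A B) =
      ∑ i ∈ Finset.range A.length, T (-sq B i) * g1 A i
      + ∑ i ∈ Finset.range B.length, T (sq A i) * g2 B i := by
  rw [Mexp, psi_add, psi_block, psi_block]
  congr 1
  · apply Finset.sum_congr rfl
    intro i _
    rw [g1, Finset.mul_sum]
    apply Finset.sum_congr rfl
    intro j _
    rw [Tmul]
    congr 1
    simp only [e1, sq]
    ring
  · apply Finset.sum_congr rfl
    intro i _
    rw [g2, Finset.mul_sum]
    apply Finset.sum_congr rfl
    intro j _
    rw [Tmul]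
    congr 1
    simp only [e2, sq]
    ring

theorem sum_part_eq {l : List ℕ} (hl : IsPartition l) {N : ℕ} (hN : l.length ≤ N)
    (f : ℕ → ℕ → R18) :
    ∀ d i, i + d = N → ∑ j ∈ Finset.range (part l i), f j (conjPart l j)
      = ∑ r ∈ Finset.Ico i N, ∑ j ∈ Finset.Ico (part l (r+1)) (part l r), f j (r+1) := by
  intro d
  induction d with
  | zero =>
    intro i hi
    have hiN : i = N := by omega
    subst hiN
    rw [Finset.Ico_self, Finset.sum_empty, part_eq_zero hN, Finset.range_zero, Finset.sum_empty]
  | succ d ih =>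
    intro i hi
    have hiN : i < N := by omega
    rw [Finset.sum_eq_sum_Ico_succ_bot hiN, ← ih (i+1) (by omega)]
    have hle : part l (i+1) ≤ part l i := part_anti hl (by omega)
    rw [Finset.range_eq_Ico, ← Finset.sum_Ico_consecutive _ (Nat.zero_le _) hle,
      ← Finset.range_eq_Ico, add_comm]
    congr 1
    apply Finset.sum_congr rfl
    intro j hj
    rw [Finset.mem_Ico] at hj
    have h1 : i < conjPart l j := (lt_part_iff hl i j).mp hj.2
    have h2 : ¬ (i+1 < conjPart l j) := fun hc =>
      absurd ((lt_part_iff hl (i+1) j).mpr hc) (by omega)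
    have h3 : conjPart l j = i + 1 := by omega
    rw [h3]

theorem Tstep (x : ℤ) : ((T 1 : R18) - 1) * T x = T (x + 1) - T x := by
  rw [sub_mul, one_mul, Tmul, add_comm]

theorem Tdiff (x : ℤ) : (1 - (T 1 : R18)) * T x = T x - T (x + 1) := by
  rw [sub_mul, one_mul, Tmul, add_comm]

theorem geom1 {a b : ℕ} (h : a ≤ b) (c : ℤ) :
    ((T 1 : R18) - 1) * ∑ j ∈ Finset.Ico a b, T ((j : ℤ) + 1 - c)
      = T ((b : ℤ) + 1 - c) - T ((a : ℤ) + 1 - c) := by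
  induction b, h using Nat.le_induction with
  | base => rw [Finset.Ico_self, Finset.sum_empty, mul_zero, sub_self]
  | succ b hb ih =>
    rw [Finset.sum_Ico_succ_top hb, mul_add, ih, Tstep]
    have h1 : ((b:ℤ) + 1 - c) + 1 = ((b+1:ℕ):ℤ) + 1 - c := by push_cast; ring
    rw [h1]
    ring

theorem geom2 {a b : ℕ} (h : a ≤ b) (c : ℤ) :
    ((T 1 : R18) - 1) * ∑ j ∈ Finset.Ico a b, T (c - (j : ℤ) - 1)
      = T (c - (a : ℤ)) - T (c - (b : ℤ)) := by
  induction b, h using Nat.le_induction with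
  | base => rw [Finset.Ico_self, Finset.sum_empty, mul_zero, sub_self]
  | succ b hb ih =>
    rw [Finset.sum_Ico_succ_top hb, mul_add, ih, Tstep]
    have h1 : (c - (b:ℤ) - 1) + 1 = c - (b:ℤ) := by ring
    have h2 : c - (b:ℤ) - 1 = c - ((b+1:ℕ):ℤ) := by push_cast; ring
    rw [h1, h2]
    ring

theorem Xg1 {l : List ℕ} (hl : IsPartition l) {N : ℕ} (hN : l.length ≤ N) {i : ℕ} (hi : i ≤ N) :
    ((T 1 : R18) - 1) * g1 l i
      = ∑ r ∈ Finset.Ico i N, (T (sq l r) - T (sq l (r+1) + 1)) := by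
  rw [g1, sum_part_eq hl hN (fun j c => T ((j : ℤ) + 1 - c)) (N - i) i (by omega),
    Finset.mul_sum]
  apply Finset.sum_congr rfl
  intro r _
  rw [geom1 (part_anti hl (Nat.le_succ r)) (((r+1:ℕ):ℤ))]
  congr 2
  · simp only [sq]; push_cast; ring
  · simp only [sq]; push_cast; ring

theorem Xg2 {l : List ℕ} (hl : IsPartition l) {N : ℕ} (hN : l.length ≤ N) {i : ℕ} (hi : i ≤ N) :
    ((T 1 : R18) - 1) * g2 l i
      = ∑ r ∈ Finset.Ico i N, (T (-sq l (r+1)) - T (1 - sq l r)) := by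
  rw [g2, sum_part_eq hl hN (fun j c => T ((c : ℤ) - j - 1)) (N - i) i (by omega),
    Finset.mul_sum]
  apply Finset.sum_congr rfl
  intro r _
  rw [geom2 (part_anti hl (Nat.le_succ r)) (((r+1:ℕ):ℤ))]
  congr 2
  · simp only [sq]; push_cast; ring
  · simp only [sq]; push_cast; ring

def PP (α β : ℕ → ℤ) (N : ℕ) : R18 :=
  ∑ i ∈ Finset.range N,
    (T (-β i) * ∑ r ∈ Finset.Ico i N, (T (α r) - T (α (r+1) + 1))
     + T (α i) * ∑ r ∈ Finset.Ico i N, (T (-β (r+1)) - T (1 - β r)))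

theorem g1_zero {l : List ℕ} {i : ℕ} (h : l.length ≤ i) : g1 l i = 0 := by
  simp [g1, part_eq_zero h]

theorem g2_zero {l : List ℕ} {i : ℕ} (h : l.length ≤ i) : g2 l i = 0 := by
  simp [g2, part_eq_zero h]

theorem X_psiM {A B : List ℕ} (hA : IsPartition A) (hB : IsPartition B) {N : ℕ}
    (hAN : A.length ≤ N) (hBN : B.length ≤ N) :
    ((T 1 : R18) - 1) * psi (Mexp A B) = PP (sq A) (sq B) N := by
  rw [psi_Mexp, mul_add, Finset.mul_sum, Finset.mul_sum]
  have e1 : ∀ i ∈ Finset.range A.length,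
      ((T 1 : R18) - 1) * (T (-sq B i) * g1 A i) = T (-sq B i) * (((T 1 : R18) - 1) * g1 A i) := by
    intros; ring
  have e2 : ∀ i ∈ Finset.range B.length,
      ((T 1 : R18) - 1) * (T (sq A i) * g2 B i) = T (sq A i) * (((T 1 : R18) - 1) * g2 B i) := by
    intros; ring
  rw [Finset.sum_congr rfl e1, Finset.sum_congr rfl e2]
  have s1 : ∑ i ∈ Finset.range A.length, T (-sq B i) * (((T 1 : R18) - 1) * g1 A i)
      = ∑ i ∈ Finset.range N, T (-sq B i) * (((T 1 : R18) - 1) * g1 A i) := by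
    apply Finset.sum_subset (Finset.range_subset_range.mpr hAN)
    intro x _ hx
    rw [g1_zero (by simpa using hx), mul_zero, mul_zero]
  have s2 : ∑ i ∈ Finset.range B.length, T (sq A i) * (((T 1 : R18) - 1) * g2 B i)
      = ∑ i ∈ Finset.range N, T (sq A i) * (((T 1 : R18) - 1) * g2 B i) := by
    apply Finset.sum_subset (Finset.range_subset_range.mpr hBN)
    intro x _ hx
    rw [g2_zero (by simpa using hx), mul_zero, mul_zero]
  rw [s1, s2, PP, ← Finset.sum_add_distrib]
  apply Finset.sum_congr rfl
  intro i hi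
  rw [Xg1 hA hAN (le_of_lt (Finset.mem_range.mp hi)),
    Xg2 hB hBN (le_of_lt (Finset.mem_range.mp hi))]

def Sig0 (β : ℕ → ℤ) (N : ℕ) : R18 := ∑ i ∈ Finset.range (N+1), T (-β i)

def Sig1 (β : ℕ → ℤ) (N : ℕ) : R18 := ∑ i ∈ Finset.range N, T (1 - β i)

def cS (β : ℕ → ℤ) (s N : ℕ) : R18 :=
  (if s < N then (∑ i ∈ Finset.range (s+1), T (-β i))
      + (∑ r ∈ Finset.Ico s N, (T (-β (r+1)) - T (1 - β r))) else 0)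
  - ∑ i ∈ Finset.range s, T (1 - β i)

theorem cS_top (β : ℕ → ℤ) (N : ℕ) : cS β N N = - Sig1 β N := by
  simp [cS, Sig1]

theorem tri_swap (N : ℕ) (f : ℕ → ℕ → R18) :
    ∑ i ∈ Finset.range N, ∑ r ∈ Finset.Ico i N, f i r
      = ∑ r ∈ Finset.range N, ∑ i ∈ Finset.range (r+1), f i r := by
  rw [Finset.sum_comm']
  intro i r
  simp only [Finset.mem_range, Finset.mem_Ico]
  omega

theorem tri_swap2 (N : ℕ) (f : ℕ → ℕ → R18) :
    ∑ i ∈ Finset.range N, ∑ s ∈ Finset.Ico (i+1) (N+1), f i s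
      = ∑ s ∈ Finset.range (N+1), ∑ i ∈ Finset.range s, f i s := by
  rw [Finset.sum_comm']
  intro i s
  simp only [Finset.mem_range, Finset.mem_Ico]
  omega

theorem sum_Ico_shift (f : ℕ → R18) (a b : ℕ) :
    ∑ r ∈ Finset.Ico a b, f (r+1) = ∑ s ∈ Finset.Ico (a+1) (b+1), f s := by
  rw [← Finset.map_add_right_Ico a b 1, Finset.sum_map]
  rfl

theorem PP_linear (α β : ℕ → ℤ) (N : ℕ) :
    PP α β N = ∑ s ∈ Finset.range (N+1), cS β s N * T (α s) := by
  have expand : PP α β N =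
      (∑ i ∈ Finset.range N, ∑ r ∈ Finset.Ico i N, T (α r - β i))
      - (∑ i ∈ Finset.range N, ∑ r ∈ Finset.Ico i N, T (α (r+1) + 1 - β i))
      + ∑ i ∈ Finset.range N,
          (∑ r ∈ Finset.Ico i N, ((T (-β (r+1)) : R18) - T (1 - β r))) * T (α i) := by
    rw [PP, Finset.sum_add_distrib, ← Finset.sum_sub_distrib]
    congr 1
    · apply Finset.sum_congr rfl
      intro i _
      rw [Finset.mul_sum, ← Finset.sum_sub_distrib]
      apply Finset.sum_congr rfl
      intro r _
      rw [mul_sub, Tmul, Tmul]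
      congr 1
      · congr 1; ring
      · congr 1; ring
    · apply Finset.sum_congr rfl
      intro i _
      ring
  rw [expand]
  have hS1 : (∑ i ∈ Finset.range N, ∑ r ∈ Finset.Ico i N, (T (α r - β i) : R18))
      = ∑ r ∈ Finset.range N, (∑ i ∈ Finset.range (r+1), (T (-β i) : R18)) * T (α r) := by
    rw [tri_swap]
    apply Finset.sum_congr rfl
    intro r _
    rw [Finset.sum_mul]
    apply Finset.sum_congr rfl
    intro i _
    rw [Tmul]
    congr 1
    ring
  have hS2 : (∑ i ∈ Finset.range N, ∑ r ∈ Finset.Ico i N, (T (α (r+1) + 1 - β i) : R18))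
      = ∑ s ∈ Finset.range (N+1), (∑ i ∈ Finset.range s, (T (1 - β i) : R18)) * T (α s) := by
    have inner : ∀ i ∈ Finset.range N,
        ∑ r ∈ Finset.Ico i N, (T (α (r+1) + 1 - β i) : R18)
          = ∑ s ∈ Finset.Ico (i+1) (N+1), (T (α s + 1 - β i) : R18) :=
      fun i _ => sum_Ico_shift (fun s => (T (α s + 1 - β i) : R18)) i N
    rw [Finset.sum_congr rfl inner, tri_swap2]
    apply Finset.sum_congr rfl
    intro s _
    rw [Finset.sum_mul]
    apply Finset.sum_congr rfl
    intro i _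
    rw [Tmul]
    congr 1
    ring
  have hcS : ∀ s ∈ Finset.range N, cS β s N * T (α s)
      = (∑ i ∈ Finset.range (s+1), (T (-β i) : R18)) * T (α s)
        + (∑ r ∈ Finset.Ico s N, ((T (-β (r+1)) : R18) - T (1 - β r))) * T (α s)
        - (∑ i ∈ Finset.range s, (T (1 - β i) : R18)) * T (α s) := by
    intro s hs
    rw [cS, if_pos (Finset.mem_range.mp hs)]
    ring
  rw [hS1, hS2, Finset.sum_range_succ, Finset.sum_range_succ, Finset.sum_congr rfl hcS,
    cS_top, Sig1]
  rw [Finset.sum_sub_distrib, Finset.sum_add_distrib]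
  ring

theorem cS_eq {β : ℕ → ℤ} {s N : ℕ} (h : s < N) : cS β s N = Sig0 β N - Sig1 β N := by
  rw [cS, if_pos h, Sig0, Sig1]
  have e1 : ∑ r ∈ Finset.Ico s N, ((T (-β (r+1)) : R18) - T (1 - β r))
      = ∑ r ∈ Finset.Ico s N, (T (-β (r+1)) : R18) - ∑ r ∈ Finset.Ico s N, (T (1 - β r) : R18) :=
    Finset.sum_sub_distrib _ _
  have e2 : ∑ r ∈ Finset.Ico s N, (T (-β (r+1)) : R18)
      = ∑ r ∈ Finset.Ico (s+1) (N+1), (T (-β r) : R18) :=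
    sum_Ico_shift (fun r => (T (-β r) : R18)) s N
  have e3 : (∑ i ∈ Finset.range (s+1), (T (-β i) : R18))
      + ∑ r ∈ Finset.Ico (s+1) (N+1), (T (-β r) : R18)
      = ∑ i ∈ Finset.range (N+1), (T (-β i) : R18) := by
    rw [Finset.range_eq_Ico, Finset.range_eq_Ico]
    exact Finset.sum_Ico_consecutive _ (by omega : 0 ≤ s+1) (by omega : s+1 ≤ N+1)
  have e4 : (∑ i ∈ Finset.range s, (T (1 - β i) : R18))
      + ∑ r ∈ Finset.Ico s N, (T (1 - β r) : R18)
      = ∑ i ∈ Finset.range N, (T (1 - β i) : R18) := by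
    rw [Finset.range_eq_Ico, Finset.range_eq_Ico]
    exact Finset.sum_Ico_consecutive _ (by omega : 0 ≤ s) (by omega : s ≤ N)
  linear_combination e1 + e2 + e3 - e4

def VV (β : ℕ → ℤ) (k N : ℕ) : R18 :=
  Sig0 β N * (∑ s ∈ Finset.Ico k N, T (-(s:ℤ)))
  - Sig1 β N * (∑ s ∈ Finset.Ico k (N+1), T (-(s:ℤ)))

theorem stepI {α α' : ℕ → ℤ} {k N : ℕ} (hk : k ≤ N)
    (h1 : ∀ s, s < k → α' s = α s - 1)
    (h2 : ∀ s, k ≤ s → α s = -(s:ℤ) ∧ α' s = -(s:ℤ)) (β : ℕ → ℤ) :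
    PP α β N - T 1 * PP α' β N = (1 - T 1) * VV β k N := by
  rw [PP_linear α β N, PP_linear α' β N, Finset.mul_sum, ← Finset.sum_sub_distrib]
  have step : ∀ s ∈ Finset.range (N+1),
      cS β s N * T (α s) - T 1 * (cS β s N * T (α' s))
        = cS β s N * (T (α s) - T (α' s + 1)) := by
    intro s _
    rw [mul_sub]
    congr 1
    rw [mul_left_comm, Tmul, add_comm]
  rw [Finset.sum_congr rfl step]
  rw [Finset.range_eq_Ico, ← Finset.sum_Ico_consecutive _ (Nat.zero_le k) (by omega : k ≤ N+1)]
  have z1 : ∑ s ∈ Finset.Ico 0 k, cS β s N * ((T (α s) : R18) - T (α' s + 1)) = 0 := by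
    apply Finset.sum_eq_zero
    intro s hs
    rw [Finset.mem_Ico] at hs
    rw [h1 s hs.2, show α s - 1 + 1 = α s by ring, sub_self, mul_zero]
  rw [z1, zero_add, Finset.sum_Ico_succ_top hk]
  have e_top : cS β N N * ((T (α N) : R18) - T (α' N + 1))
      = (- Sig1 β N) * ((1 - T 1) * T (-(N:ℤ))) := by
    obtain ⟨ha, ha'⟩ := h2 N hk
    rw [cS_top, ha, ha', Tdiff]
  have e_mid : ∀ s ∈ Finset.Ico k N, cS β s N * ((T (α s) : R18) - T (α' s + 1))
      = ((Sig0 β N - Sig1 β N) * (1 - T 1)) * T (-(s:ℤ)) := by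
    intro s hs
    rw [Finset.mem_Ico] at hs
    obtain ⟨ha, ha'⟩ := h2 s hs.1
    rw [cS_eq hs.2, ha, ha', ← Tdiff]
    ring
  rw [Finset.sum_congr rfl e_mid, e_top, ← Finset.mul_sum, VV]
  rw [show ∑ s ∈ Finset.Ico k (N+1), (T (-(s:ℤ)) : R18)
      = (∑ s ∈ Finset.Ico k N, (T (-(s:ℤ)) : R18)) + T (-(N:ℤ))
    from Finset.sum_Ico_succ_top hk _]
  ring

theorem reindex_skip (f : ℕ → R18) {n m : ℕ} (hn : n ≤ m) :
    ∑ i ∈ Finset.range m, f (if i < n then i else i + 1)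
      = ∑ j ∈ Finset.range (m+1), f j - f n := by
  rw [Finset.range_eq_Ico,
    ← Finset.sum_Ico_consecutive (fun i => f (if i < n then i else i + 1))
      (Nat.zero_le n) hn, Finset.range_eq_Ico,
    ← Finset.sum_Ico_consecutive f (Nat.zero_le n) (by omega : n ≤ m+1)]
  have c1 : ∑ i ∈ Finset.Ico 0 n, f (if i < n then i else i + 1)
      = ∑ i ∈ Finset.Ico 0 n, f i := by
    apply Finset.sum_congr rfl
    intro i hi
    rw [if_pos (Finset.mem_Ico.mp hi).2]
  have c2 : ∑ i ∈ Finset.Ico n m, f (if i < n then i else i + 1)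
      = ∑ i ∈ Finset.Ico n m, f (i+1) := by
    apply Finset.sum_congr rfl
    intro i hi
    have := (Finset.mem_Ico.mp hi).1
    rw [if_neg (by omega)]
  rw [c1, c2, sum_Ico_shift f n m, Finset.sum_eq_sum_Ico_succ_bot (by omega : n < m+1) f]
  ring

theorem geomG {k N : ℕ} (hk : k ≤ N) :
    (1 - (T 1 : R18)) * ∑ s ∈ Finset.Ico k N, T (-(s:ℤ))
      = T (1 - (N:ℤ)) - T (1 - (k:ℤ)) := by
  induction N, hk using Nat.le_induction with
  | base => rw [Finset.Ico_self, Finset.sum_empty, mul_zero, sub_self]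
  | succ N hN ih =>
    rw [Finset.sum_Ico_succ_top hN, mul_add, ih, Tdiff]
    rw [show -(N:ℤ) + 1 = 1 - (N:ℤ) by ring,
      show (1:ℤ) - ((N+1:ℕ):ℤ) = -(N:ℤ) by push_cast; ring]
    ring

theorem stepII {lam : List ℕ} (hlam : IsPartition lam) {n N k : ℕ}
    (hN1 : lam.length ≤ N) (hnN : n + 1 ≤ N) (hkN : k ≤ N) :
    VV (sq lam) k N - T 1 * VV (sq (rn n lam)) k N = T 1 - T (1 - sq lam n - k) := by
  have b1 : sq lam (N+1) = -((N:ℤ)+1) := by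
    rw [sq, part_eq_zero (by omega : lam.length ≤ N+1)]; push_cast; ring
  have b2 : sq lam N = -(N:ℤ) := by
    rw [sq, part_eq_zero hN1]; push_cast; ring
  have hA : T 1 * Sig0 (sq (rn n lam)) N
      = (Sig0 (sq lam) N + T ((N:ℤ)+1)) - T (-(sq lam n)) := by
    rw [Sig0, Finset.mul_sum]
    have e : ∀ i ∈ Finset.range (N+1),
        T 1 * (T (-(sq (rn n lam) i)) : R18)
          = T (-(sq lam (if i < n then i else i + 1))) := by
      intro i _
      rw [Tmul]
      congr 1
      by_cases hin : i < n
      · rw [if_pos hin, sq, sq, part_rn_lt hin]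
        push_cast; ring
      · rw [if_neg hin, sq, sq, part_rn_ge (Nat.not_lt.mp hin)]
        push_cast; ring
    rw [Finset.sum_congr rfl e,
      reindex_skip (fun j => (T (-(sq lam j)) : R18)) (show n ≤ N+1 by omega)]
    rw [Finset.sum_range_succ, b1, Sig0]
    simp only [neg_neg]
  have hB : T 1 * Sig1 (sq (rn n lam)) N
      = (Sig1 (sq lam) N + T ((N:ℤ)+1)) - T (1 - sq lam n) := by
    rw [Sig1, Finset.mul_sum]
    have e : ∀ i ∈ Finset.range N,
        T 1 * (T (1 - sq (rn n lam) i) : R18)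
          = T (1 - sq lam (if i < n then i else i + 1)) := by
      intro i _
      rw [Tmul]
      congr 1
      by_cases hin : i < n
      · rw [if_pos hin, sq, sq, part_rn_lt hin]
        push_cast; ring
      · rw [if_neg hin, sq, sq, part_rn_ge (Nat.not_lt.mp hin)]
        push_cast; ring
    rw [Finset.sum_congr rfl e,
      reindex_skip (fun j => (T (1 - sq lam j) : R18)) (show n ≤ N by omega)]
    rw [Finset.sum_range_succ, b2, Sig1]
    rw [show (1:ℤ) - -(N:ℤ) = (N:ℤ)+1 by ring]
  rw [VV, VV]
  have eg2 : ∑ s ∈ Finset.Ico k (N+1), (T (-(s:ℤ)) : R18)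
      = (∑ s ∈ Finset.Ico k N, (T (-(s:ℤ)) : R18)) + T (-(N:ℤ)) :=
    Finset.sum_Ico_succ_top hkN _
  have ehG : (1 - (T 1 : R18)) * ∑ s ∈ Finset.Ico k N, T (-(s:ℤ))
      = T (1 - (N:ℤ)) - T (1 - (k:ℤ)) := geomG hkN
  have h1q : (T (1 - sq lam n) : R18) = T (-(sq lam n)) * T 1 := by
    rw [Tmul]; congr 1; ring
  have h2wv : (T ((N:ℤ)+1) : R18) * T (-(N:ℤ)) = T 1 := by
    rw [Tmul]; congr 1; ring
  have h3 : (T (1 - sq lam n) : R18) * T (-(N:ℤ)) = T (1 - (N:ℤ)) * T (-(sq lam n)) := by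
    rw [Tmul, Tmul]; congr 1; ring
  have h4 : (T (-(sq lam n)) : R18) * T (1 - (k:ℤ)) = T (1 - sq lam n - (k:ℤ)) := by
    rw [Tmul]; congr 1; ring
  linear_combination (-(∑ s ∈ Finset.Ico k N, (T (-(s:ℤ)) : R18))) * hA
    + (∑ s ∈ Finset.Ico k (N+1), (T (-(s:ℤ)) : R18)) * hB
    + (T ((N:ℤ)+1) - T (1 - sq lam n)) * eg2
    + h2wv
    - (∑ s ∈ Finset.Ico k N, (T (-(s:ℤ)) : R18)) * h1q
    + T (-(sq lam n)) * ehG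
    - h3 - h4

theorem hXne : ((T 1 : R18) - 1) ≠ 0 := by
  intro h
  have h0 : ((T 1 - 1 : R18)).coeff 0 = (0 : R18).coeff 0 := congrArg (fun p : R18 => p.coeff 0) h
  have e1 : ((T 1 - 1 : R18)).coeff 0 = (T 1 : R18).coeff 0 - (1 : R18).coeff 0 := rfl
  have e2 : (T 1 : R18).coeff 0 = if (1:ℤ) = 0 then 1 else 0 := T_apply _ _
  have e3 : (1 : R18).coeff 0 = if (0:ℤ) = 0 then (1:ℤ) else 0 := by
    rw [← T_zero]; exact T_apply _ _
  have e4 : (0 : R18).coeff 0 = 0 := rfl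
  rw [e1, e2, e3, e4] at h0
  norm_num at h0

theorem Rmain {lam mu : List ℕ} (hlam : IsPartition lam) (hmu : IsPartition mu) (n : ℕ) :
    psi (Mexp mu lam) + T 2 * psi (Mexp (bar mu) (rn n lam)) + T 1
      = T 1 * psi (Mexp (bar mu) lam) + T 1 * psi (Mexp mu (rn n lam))
        + T (1 - sq lam n - mu.length) := by
  set N := n + 1 + lam.length + mu.length with hN
  have hmuN : mu.length ≤ N := by omega
  have hlamN : lam.length ≤ N := by omega
  have hbarN : (bar mu).length ≤ N := le_trans (length_bar_le mu) (by omega)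
  have hetaN : (rn n lam).length ≤ N := le_trans (length_rn_le n lam) (by omega)
  have hbar : IsPartition (bar mu) := isPartition_bar hmu
  have heta : IsPartition (rn n lam) := isPartition_rn hlam
  have E1 := X_psiM hmu hlam hmuN hlamN
  have E2 := X_psiM hbar heta hbarN hetaN
  have E3 := X_psiM hbar hlam hbarN hlamN
  have E4 := X_psiM hmu heta hmuN hetaN
  have hh1 : ∀ s, s < mu.length → sq (bar mu) s = sq mu s - 1 := by
    intro s hs
    rw [sq, sq, part_bar hmu s]
    have hp := part_pos hmu hs
    have hc : (↑(part mu s - 1) : ℤ) = (part mu s : ℤ) - 1 := by omega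
    rw [hc]; ring
  have hh2 : ∀ s, mu.length ≤ s → sq mu s = -(s:ℤ) ∧ sq (bar mu) s = -(s:ℤ) := by
    intro s hs
    constructor
    · rw [sq, part_eq_zero hs]; push_cast; ring
    · rw [sq, part_bar hmu s, part_eq_zero hs]
      norm_num
  have S1 := stepI hmuN hh1 hh2 (sq lam)
  have S2 := stepI hmuN hh1 hh2 (sq (rn n lam))
  have S3 := stepII hlam hlamN (by omega : n + 1 ≤ N) hmuN
  have hT2 : (T 2 : R18) = T 1 * T 1 := by rw [Tmul]; norm_num
  apply mul_left_cancel₀ hXne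
  linear_combination E1 + T 2 * E2 - T 1 * E3 - T 1 * E4 + S1 - T 1 * S2
    + (1 - T 1) * S3 + PP (sq (bar mu)) (sq (rn n lam)) N * hT2

theorem star {lam mu : List ℕ} (hlam : IsPartition lam) (hmu : IsPartition mu) (n : ℕ) :
    Mexp mu lam + (Mexp (bar mu) (rn n lam)).map (· + 2) + {1}
      = (Mexp (bar mu) lam).map (· + 1) + (Mexp mu (rn n lam)).map (· + 1)
        + {1 - sq lam n - mu.length} := by
  apply psi_inj
  rw [psi_add, psi_add, psi_add, psi_add, psi_shift, psi_shift, psi_shift,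
    psi_singleton, psi_singleton]
  exact Rmain hlam hmu n

theorem nek_shift (q u : ℂ) (hq : q ≠ 0) (A B : List ℕ) (s : ℤ) :
    nek q (q ^ s * u) A B
      = (((Mexp A B).map (· + s)).map (fun e => 1 - q ^ e * u)).prod := by
  rw [nek_eq q (q ^ s * u) A B, Multiset.map_map]
  congr 1
  apply Multiset.map_congr rfl
  intro e _
  simp only [Function.comp]
  rw [zpow_add₀ hq e s]
  ring

theorem sum_rn_int (n : ℕ) (lam : List ℕ) (k : ℤ) :
    ((rn n lam).sum : ℤ) - (lam.sum : ℤ) + 1 - k = 1 - sq lam n - k := by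
  have hsum := sum_rn n lam
  have hc : ((rn n lam).sum : ℤ) + (part lam n : ℤ) = (n : ℤ) + (lam.sum : ℤ) := by
    exact_mod_cast congrArg (fun x : ℕ => (x : ℤ)) hsum
  rw [sq]
  omega

end

end S18

theorem stmt18 (q : ℂ) (hq : q ≠ 0)
    (lam mu : List ℕ) (hlam : IsPartition lam) (hmu : IsPartition mu) (n : ℕ) (u : ℂ) :
    let eta := rn n lam
    nek q u mu lam * nek q (q ^ 2 * u) (bar mu) eta * (1 - q * u) =
      nek q (q * u) (bar mu) lam * nek q (q * u) mu eta *
        (1 - q ^ ((eta.sum : ℤ) - (lam.sum : ℤ) + 1 - (mu.length : ℤ)) * u) := by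
  intro eta
  have hq1 : q * u = q ^ (1:ℤ) * u := by rw [zpow_one]
  have hq2 : q ^ 2 * u = q ^ (2:ℤ) * u := by
    rw [show ((2:ℤ)) = ((2:ℕ):ℤ) by norm_num, zpow_natCast]
  have honef : (1 : ℂ) - q ^ (1:ℤ) * u = 1 - q * u := by rw [zpow_one]
  have hM := S18.sum_rn_int n lam (mu.length : ℤ)
  calc nek q u mu lam * nek q (q ^ 2 * u) (bar mu) eta * (1 - q * u)
      = ((S18.Mexp mu lam + (S18.Mexp (bar mu) eta).map (· + 2) + {1}).map
          (fun e => 1 - q ^ e * u)).prod := by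
        rw [Multiset.map_add, Multiset.map_add, Multiset.prod_add, Multiset.prod_add]
        rw [S18.nek_eq q u mu lam, hq2, S18.nek_shift q u hq (bar mu) eta 2]
        rw [Multiset.map_singleton, Multiset.prod_singleton, zpow_one]
    _ = (((S18.Mexp (bar mu) lam).map (· + 1) + (S18.Mexp mu eta).map (· + 1)
          + {1 - S18.sq lam n - mu.length}).map (fun e => 1 - q ^ e * u)).prod := by
        rw [S18.star hlam hmu n]
    _ = nek q (q * u) (bar mu) lam * nek q (q * u) mu eta *
        (1 - q ^ ((eta.sum : ℤ) - (lam.sum : ℤ) + 1 - (mu.length : ℤ)) * u) := by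
        rw [Multiset.map_add, Multiset.map_add, Multiset.prod_add, Multiset.prod_add]
        rw [hq1, S18.nek_shift q u hq (bar mu) lam 1, S18.nek_shift q u hq mu eta 1]
        rw [Multiset.map_singleton, Multiset.prod_singleton, hM]
end
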